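/- (Uncoded transmission does not benefit from collective measurement: converse part) Let γ ∈ [0,1] and n ≥ 1. Set ρ_0 = ρ₊ and ρ_1 = ρ₋, and for each x ∈ {0,1}^n let σ_x be the matrix indexed by {0,1}^n × {0,1}^n with entries σ_x(u, v) = ∏_{j=1}^n (N_γ(ρ_{x_j}))(u_j, v_j). Then for every POVM (Λ_x)_{x ∈ {0,1}^n} on ℂ^{2^n} (positive semidefinite matrices indexed by {0,1}^n summing to the identity), 2^{−n} · Σ_{x ∈ {0,1}^n} Re Tr(Λ_x σ_x) ≤ ((1 + √(1−γ))/2)^n. -/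

import Mathlib

open Matrix Complex
open scoped ComplexOrder

/-- Kraus operator `K₀` of the qubit amplitude damping channel. -/
noncomputable def K₀ (γ : ℝ) : Matrix (Fin 2) (Fin 2) ℂ :=
  !![1, 0; 0, (Real.sqrt (1 - γ) : ℂ)]

/-- Kraus operator `K₁` of the qubit amplitude damping channel. -/
noncomputable def K₁ (γ : ℝ) : Matrix (Fin 2) (Fin 2) ℂ :=
  !![0, (Real.sqrt γ : ℂ); 0, 0]

/-- The qubit amplitude damping channel with damping parameter `γ`. -/
noncomputable def ADC (γ : ℝ) (ρ : Matrix (Fin 2) (Fin 2) ℂ) : Matrix (Fin 2) (Fin 2) ℂ :=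
  K₀ γ * ρ * (K₀ γ)ᴴ + K₁ γ * ρ * (K₁ γ)ᴴ

/-- The state `ρ₊ = |+⟩⟨+|`. -/
noncomputable def ρPlus : Matrix (Fin 2) (Fin 2) ℂ := (1/2 : ℂ) • !![1, 1; 1, 1]

/-- The state `ρ₋ = |−⟩⟨−|`. -/
noncomputable def ρMinus : Matrix (Fin 2) (Fin 2) ℂ := (1/2 : ℂ) • !![1, -1; -1, 1]

/-- The encoding `0 ↦ ρ₊`, `1 ↦ ρ₋`. -/
noncomputable def ρbit (i : Fin 2) : Matrix (Fin 2) (Fin 2) ℂ :=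
  if i = 0 then ρPlus else ρMinus

/-- The tensor-product channel output `N_γ(ρ_{x₁}) ⊗ ⋯ ⊗ N_γ(ρ_{xₙ})` for the uncoded word
`x ∈ {0,1}ⁿ`, realized as a matrix indexed by `{0,1}ⁿ` with entrywise products. -/
noncomputable def σout (γ : ℝ) (n : ℕ) (x : Fin n → Fin 2) :
    Matrix (Fin n → Fin 2) (Fin n → Fin 2) ℂ :=
  Matrix.of fun u v => ∏ j, (ADC γ (ρbit (x j))) (u j) (v j)

/-- The tensor-product measurement operator `ρ_{x₁} ⊗ ⋯ ⊗ ρ_{xₙ}` (individual optimal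
single-use measurements). -/
noncomputable def Pind (n : ℕ) (x : Fin n → Fin 2) :
    Matrix (Fin n → Fin 2) (Fin n → Fin 2) ℂ :=
  Matrix.of fun u v => ∏ j, (ρbit (x j)) (u j) (v j)

/-! ### Auxiliary tensor-product machinery -/

/-- A tensor product of `n` qubit matrices, realized as a matrix indexed by `{0,1}ⁿ`. -/
noncomputable def Tn {n : ℕ} (m : Fin n → Matrix (Fin 2) (Fin 2) ℂ) :
    Matrix (Fin n → Fin 2) (Fin n → Fin 2) ℂ :=
  Matrix.of fun u v => ∏ j, m j (u j) (v j)

lemma Tn_mul {n : ℕ} (m m' : Fin n → Matrix (Fin 2) (Fin 2) ℂ) :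
    Tn m * Tn m' = Tn (fun j => m j * m' j) := by
  ext u v
  simp only [Tn, Matrix.mul_apply, Matrix.of_apply]
  rw [show (∏ j, ∑ k, m j (u j) k * m' j k (v j))
      = ∑ w : Fin n → Fin 2, ∏ j, m j (u j) (w j) * m' j (w j) (v j) from
    Fintype.prod_sum _]
  exact Finset.sum_congr rfl fun w _ => (Finset.prod_mul_distrib).symm

lemma Tn_conjTranspose {n : ℕ} (m : Fin n → Matrix (Fin 2) (Fin 2) ℂ) :
    (Tn m)ᴴ = Tn (fun j => (m j)ᴴ) := by
  ext u v
  simp [Tn, Matrix.conjTranspose_apply, star_prod]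

lemma Matrix.posSemidef_iff_eq_transpose_mul_self {ι : Type*} [Fintype ι] [DecidableEq ι]
    {A : Matrix ι ι ℂ} : A.PosSemidef ↔ ∃ B : Matrix ι ι ℂ, A = Bᴴ * B := by
  open scoped MatrixOrder in
  constructor
  · intro hA
    obtain ⟨B, rfl⟩ := CStarAlgebra.nonneg_iff_eq_star_mul_self.mp hA.nonneg
    exact ⟨B, rfl⟩
  · rintro ⟨B, rfl⟩
    exact Matrix.posSemidef_conjTranspose_mul_self B

lemma Tn_posSemidef {n : ℕ} {m : Fin n → Matrix (Fin 2) (Fin 2) ℂ}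
    (h : ∀ j, (m j).PosSemidef) : (Tn m).PosSemidef := by
  choose B hB using fun j => (Matrix.posSemidef_iff_eq_transpose_mul_self).mp (h j)
  have hmB : m = fun j => (B j)ᴴ * B j := funext hB
  have : Tn m = (Tn B)ᴴ * Tn B := by
    rw [Tn_conjTranspose, Tn_mul, ← hmB]
  rw [this]; exact Matrix.posSemidef_conjTranspose_mul_self _

lemma Tn_trace {n : ℕ} (m : Fin n → Matrix (Fin 2) (Fin 2) ℂ) :
    (Tn m).trace = ∏ j, (m j).trace := by
  simp only [Matrix.trace, Matrix.diag, Tn, Matrix.of_apply]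
  exact (Fintype.prod_sum fun j k => m j k k).symm

lemma Tn_sub_update {n : ℕ} (m1 m2 : Fin n → Matrix (Fin 2) (Fin 2) ℂ) (k : Fin n)
    (h : ∀ j, j ≠ k → m1 j = m2 j) :
    Tn m1 - Tn m2 = Tn (Function.update m1 k (m1 k - m2 k)) := by
  ext u v
  simp only [Matrix.sub_apply, Tn, Matrix.of_apply]
  rw [← Finset.mul_prod_erase Finset.univ _ (Finset.mem_univ k),
      ← Finset.mul_prod_erase Finset.univ _ (Finset.mem_univ k),
      ← Finset.mul_prod_erase Finset.univ _ (Finset.mem_univ k)]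
  have h2 : ∏ j ∈ Finset.univ.erase k, m2 j (u j) (v j)
      = ∏ j ∈ Finset.univ.erase k, m1 j (u j) (v j) := by
    refine Finset.prod_congr rfl fun j hj => ?_
    rw [h j (Finset.ne_of_mem_erase hj)]
  have h3 : ∏ j ∈ Finset.univ.erase k, (Function.update m1 k (m1 k - m2 k)) j (u j) (v j)
      = ∏ j ∈ Finset.univ.erase k, m1 j (u j) (v j) := by
    refine Finset.prod_congr rfl fun j hj => ?_
    rw [Function.update_of_ne (Finset.ne_of_mem_erase hj)]
  rw [h2, h3, Function.update_self, Matrix.sub_apply, sub_mul]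

lemma Tn_sub_posSemidef {n : ℕ} {m m' : Fin n → Matrix (Fin 2) (Fin 2) ℂ}
    (hm : ∀ j, (m j).PosSemidef) (hm' : ∀ j, (m' j).PosSemidef)
    (hd : ∀ j, (m' j - m j).PosSemidef) : (Tn m' - Tn m).PosSemidef := by
  set f : ℕ → Matrix (Fin n → Fin 2) (Fin n → Fin 2) ℂ :=
    fun k => Tn (fun j => if (j : ℕ) < k then m' j else m j) with hf
  have h0 : f 0 = Tn m := by simp [hf]
  have hn : f n = Tn m' := by
    have he : (fun j : Fin n => if (j : ℕ) < n then m' j else m j) = m' :=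
      funext fun j => by simp [j.isLt]
    show Tn (fun j : Fin n => if (j : ℕ) < n then m' j else m j) = Tn m'
    rw [he]
  have key : ∀ k < n, (f (k + 1) - f k).PosSemidef := by
    intro k hk
    set K : Fin n := ⟨k, hk⟩ with hK
    have hupd : f (k + 1) - f k
        = Tn (Function.update (fun j => if (j : ℕ) < k + 1 then m' j else m j) K
            ((if (K : ℕ) < k + 1 then m' K else m K) - (if (K : ℕ) < k then m' K else m K))) := by
      apply Tn_sub_update
      intro j hj
      have : ((j : ℕ) < k + 1) ↔ ((j : ℕ) < k) := by
        constructor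
        · intro h'
          rcases Nat.lt_succ_iff_lt_or_eq.mp h' with h'' | h''
          · exact h''
          · exact absurd (Fin.ext h'' : j = K) hj
        · exact fun h' => Nat.lt_succ_of_lt h'
      simp [this]
    rw [hupd]
    apply Tn_posSemidef
    intro j
    rcases eq_or_ne j K with rfl | hj
    · rw [Function.update_self]
      simpa [hK] using hd K
    · rw [Function.update_of_ne hj]
      by_cases h' : (j : ℕ) < k + 1
      · simpa [h'] using hm' j
      · simpa [h'] using hm j
  have hsum : Tn m' - Tn m = ∑ k ∈ Finset.range n, (f (k + 1) - f k) := by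
    rw [Finset.sum_range_sub, h0, hn]
  rw [hsum]
  refine Finset.sum_induction _ _ (fun a b ha hb => ha.add hb) ?_ ?_
  · exact Matrix.PosSemidef.zero
  · intro k hk; exact key k (Finset.mem_range.mp hk)

/-! ### Trace positivity -/

lemma posSemidef_trace_nonneg {ι : Type*} [Fintype ι] {M : Matrix ι ι ℂ}
    (hM : M.PosSemidef) : 0 ≤ M.trace := by
  classical
  refine Finset.sum_nonneg fun i _ => ?_
  simpa [dotProduct, Pi.single_apply, apply_ite] using hM.dotProduct_mulVec_nonneg (Pi.single i 1)

lemma trace_mul_nonneg {ι : Type*} [Fintype ι] [DecidableEq ι] {A B : Matrix ι ι ℂ}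
    (hA : A.PosSemidef) (hB : B.PosSemidef) : 0 ≤ (A * B).trace := by
  obtain ⟨C, rfl⟩ := Matrix.posSemidef_iff_eq_transpose_mul_self.mp hB
  rw [← Matrix.mul_assoc, Matrix.trace_mul_cycle]
  exact posSemidef_trace_nonneg (hA.mul_mul_conjTranspose_same C)

/-! ### Concrete 2×2 computations -/

/-- The dominating single-site diagonal matrix `E = σ̄ + (s/2)·I`. -/
noncomputable def Ediag (γ : ℝ) : Matrix (Fin 2) (Fin 2) ℂ :=
  Matrix.diagonal ![(((1 + γ + Real.sqrt (1 - γ)) / 2 : ℝ) : ℂ),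
    (((1 - γ + Real.sqrt (1 - γ)) / 2 : ℝ) : ℂ)]

lemma Ediag_posSemidef (γ : ℝ) (hγ0 : 0 ≤ γ) (hγ1 : γ ≤ 1) : (Ediag γ).PosSemidef := by
  refine Matrix.posSemidef_diagonal_iff.mpr fun i => ?_
  have hs0 : 0 ≤ Real.sqrt (1 - γ) := Real.sqrt_nonneg _
  fin_cases i <;> simp only [Matrix.cons_val_zero, Matrix.cons_val_one, Matrix.head_cons] <;>
    exact Complex.zero_le_real.mpr (by linarith)

lemma Ediag_trace (γ : ℝ) : (Ediag γ).trace = ((1 + Real.sqrt (1 - γ) : ℝ) : ℂ) := by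
  simp only [Ediag, Matrix.trace_diagonal, Fin.sum_univ_two, Matrix.cons_val_zero,
    Matrix.cons_val_one, Matrix.head_cons]
  push_cast; ring

lemma ADC_bit (γ : ℝ) (hγ0 : 0 ≤ γ) (hγ1 : γ ≤ 1) (i : Fin 2) :
    ADC γ (ρbit i) = !![(((1 + γ) / 2 : ℝ) : ℂ),
        (if i = 0 then 1 else -1) * ((Real.sqrt (1 - γ) / 2 : ℝ) : ℂ);
      (if i = 0 then 1 else -1) * ((Real.sqrt (1 - γ) / 2 : ℝ) : ℂ), (((1 - γ) / 2 : ℝ) : ℂ)] := by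
  have h1 : (Real.sqrt (1 - γ) : ℂ) * (Real.sqrt (1 - γ) : ℂ) = ((1 : ℂ) - γ) := by
    rw [← Complex.ofReal_mul, Real.mul_self_sqrt (by linarith)]
    push_cast; ring
  have h2 : (Real.sqrt γ : ℂ) * (Real.sqrt γ : ℂ) = (γ : ℂ) := by
    rw [← Complex.ofReal_mul, Real.mul_self_sqrt hγ0]
  have h1' : (Real.sqrt (1 - γ) : ℂ) ^ 2 = ((1 : ℂ) - γ) := by rw [sq]; exact h1
  have h2' : (Real.sqrt γ : ℂ) ^ 2 = (γ : ℂ) := by rw [sq]; exact h2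
  fin_cases i <;>
  · ext a b
    fin_cases a <;> fin_cases b <;>
      simp [ADC, ρbit, K₀, K₁, ρPlus, ρMinus, Matrix.mul_apply, Matrix.vecMul,
        dotProduct, Matrix.conjTranspose_apply, Fin.sum_univ_two,
        Complex.conj_ofReal] <;>
      push_cast <;> ring_nf <;>
      simp [h1, h2, h1', h2'] <;> push_cast <;> ring_nf

lemma ADC_bit_posSemidef (γ : ℝ) (i : Fin 2) : (ADC γ (ρbit i)).PosSemidef := by
  have hr : ((Real.sqrt (1/2) : ℝ) : ℂ) * ((Real.sqrt (1/2) : ℝ) : ℂ) = (1/2 : ℂ) := by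
    rw [← Complex.ofReal_mul, Real.mul_self_sqrt (by norm_num)]
    norm_num
  have hr2 : ((Real.sqrt 2 : ℝ) : ℂ)⁻¹ * ((Real.sqrt 2 : ℝ) : ℂ)⁻¹ = 2⁻¹ := by
    rw [← mul_inv, ← Complex.ofReal_mul, Real.mul_self_sqrt (by norm_num)]
    norm_num
  have hρ : (ρbit i).PosSemidef := by
    fin_cases i
    · have : ρPlus = (!![((Real.sqrt (1/2) : ℝ) : ℂ), ((Real.sqrt (1/2) : ℝ) : ℂ); 0, 0])ᴴ
          * !![((Real.sqrt (1/2) : ℝ) : ℂ), ((Real.sqrt (1/2) : ℝ) : ℂ); 0, 0] := by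
        ext a b
        fin_cases a <;> fin_cases b <;>
          simp [ρPlus, Matrix.mul_apply, Matrix.conjTranspose_apply, Fin.sum_univ_two,
            Complex.conj_ofReal, hr, hr2]
      show ρPlus.PosSemidef
      rw [this]; exact Matrix.posSemidef_conjTranspose_mul_self _
    · have : ρMinus = (!![((Real.sqrt (1/2) : ℝ) : ℂ), -((Real.sqrt (1/2) : ℝ) : ℂ); 0, 0])ᴴ
          * !![((Real.sqrt (1/2) : ℝ) : ℂ), -((Real.sqrt (1/2) : ℝ) : ℂ); 0, 0] := by
        ext a b
        fin_cases a <;> fin_cases b <;>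
          simp [ρMinus, Matrix.mul_apply, Matrix.conjTranspose_apply, Fin.sum_univ_two,
            Complex.conj_ofReal, hr, hr2]
      show ρMinus.PosSemidef
      rw [this]; exact Matrix.posSemidef_conjTranspose_mul_self _
  exact (hρ.mul_mul_conjTranspose_same (K₀ γ)).add (hρ.mul_mul_conjTranspose_same (K₁ γ))

lemma Ediag_sub_posSemidef (γ : ℝ) (hγ0 : 0 ≤ γ) (hγ1 : γ ≤ 1) (i : Fin 2) :
    (Ediag γ - ADC γ (ρbit i)).PosSemidef := by
  set s := Real.sqrt (1 - γ) with hsdef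
  have hs0 : 0 ≤ s := Real.sqrt_nonneg _
  set t : ℝ := Real.sqrt (s / 2) with htdef
  have ht : ((t : ℝ) : ℂ) * ((t : ℝ) : ℂ) = ((s / 2 : ℝ) : ℂ) := by
    rw [← Complex.ofReal_mul, Real.mul_self_sqrt (by linarith)]
  have ht2 : ((t : ℝ) : ℂ) ^ 2 = ((s / 2 : ℝ) : ℂ) := by rw [sq, ht]
  fin_cases i
  · have key : Ediag γ - ADC γ (ρbit 0)
        = (!![((t : ℝ) : ℂ), -((t : ℝ) : ℂ); 0, 0])ᴴ * !![((t : ℝ) : ℂ), -((t : ℝ) : ℂ); 0, 0] := by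
      rw [ADC_bit γ hγ0 hγ1 0]
      ext a b
      fin_cases a <;> fin_cases b <;>
        simp [Ediag, Matrix.mul_apply, Matrix.conjTranspose_apply, Fin.sum_univ_two,
          Matrix.diagonal, Complex.conj_ofReal, ht, ht2] <;>
        push_cast <;> ring_nf <;>
        simp [ht, ht2, hsdef] <;> push_cast <;> ring_nf
    rw [show (ρbit (⟨0, by norm_num⟩ : Fin 2)) = ρbit 0 from rfl, key]
    exact Matrix.posSemidef_conjTranspose_mul_self _
  · have key : Ediag γ - ADC γ (ρbit 1)
        = (!![((t : ℝ) : ℂ), ((t : ℝ) : ℂ); 0, 0])ᴴ * !![((t : ℝ) : ℂ), ((t : ℝ) : ℂ); 0, 0] := by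
      rw [ADC_bit γ hγ0 hγ1 1]
      ext a b
      fin_cases a <;> fin_cases b <;>
        simp [Ediag, Matrix.mul_apply, Matrix.conjTranspose_apply, Fin.sum_univ_two,
          Matrix.diagonal, Complex.conj_ofReal, ht, ht2] <;>
        push_cast <;> ring_nf <;>
        simp [ht, ht2, hsdef] <;> push_cast <;> ring_nf
    rw [show (ρbit (⟨1, by norm_num⟩ : Fin 2)) = ρbit 1 from rfl, key]
    exact Matrix.posSemidef_conjTranspose_mul_self _

/-- uncoded transmission, converse part: for every POVM `(Λ_x)_{x∈{0,1}ⁿ}` on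
`ℂ^{2ⁿ}`, the average success probability of the uncoded scheme with inputs `ρ₊, ρ₋` over `n`
uses of the ADC is at most `((1 + √(1−γ))/2)ⁿ`. -/
theorem stmt10 (γ : ℝ) (hγ0 : 0 ≤ γ) (hγ1 : γ ≤ 1) (n : ℕ) (hn : 1 ≤ n)
    (Λ : (Fin n → Fin 2) → Matrix (Fin n → Fin 2) (Fin n → Fin 2) ℂ)
    (hΛ : ∀ x, (Λ x).PosSemidef) (hΛsum : ∑ x, Λ x = 1) :
    ((2 : ℝ) ^ n)⁻¹ * ∑ x, (Λ x * σout γ n x).trace.re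
      ≤ ((1 + Real.sqrt (1 - γ)) / 2) ^ n := by
  set s := Real.sqrt (1 - γ) with hsdef
  have hs0 : 0 ≤ s := Real.sqrt_nonneg _
  set D : Matrix (Fin n → Fin 2) (Fin n → Fin 2) ℂ := Tn (fun _ : Fin n => Ediag γ) with hD
  have hσ : ∀ x : Fin n → Fin 2, σout γ n x = Tn (fun j => ADC γ (ρbit (x j))) := fun _ => rfl
  have hDx : ∀ x : Fin n → Fin 2, (D - σout γ n x).PosSemidef := by
    intro x
    rw [hσ x, hD]
    exact Tn_sub_posSemidef (fun j => ADC_bit_posSemidef γ (x j))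
      (fun _ => Ediag_posSemidef γ hγ0 hγ1) (fun j => Ediag_sub_posSemidef γ hγ0 hγ1 (x j))
  have key : ∀ x : Fin n → Fin 2, (Λ x * σout γ n x).trace.re ≤ (Λ x * D).trace.re := by
    intro x
    have h1 : (Λ x * D).trace = (Λ x * σout γ n x).trace + (Λ x * (D - σout γ n x)).trace := by
      rw [← Matrix.trace_add, ← Matrix.mul_add, add_sub_cancel]
    have h2 : 0 ≤ (Λ x * (D - σout γ n x)).trace := trace_mul_nonneg (hΛ x) (hDx x)
    have h2' : 0 ≤ (Λ x * (D - σout γ n x)).trace.re := (Complex.le_def.mp h2).1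
    rw [h1, Complex.add_re]
    linarith
  have hsum_le : ∑ x, (Λ x * σout γ n x).trace.re ≤ ∑ x, (Λ x * D).trace.re :=
    Finset.sum_le_sum fun x _ => key x
  have hDtr : D.trace = ((1 + s : ℝ) : ℂ) ^ n := by
    rw [hD, Tn_trace]
    simp [Ediag_trace γ, Finset.prod_const, Finset.card_univ]; rfl
  have hsumD : ∑ x, (Λ x * D).trace.re = (1 + s) ^ n := by
    have : ∑ x, (Λ x * D).trace = D.trace := by
      rw [← Matrix.trace_sum, ← Finset.sum_mul, hΛsum, one_mul]
    calc ∑ x, (Λ x * D).trace.re = (∑ x, (Λ x * D).trace).re := by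
          rw [Complex.re_sum]
      _ = (1 + s) ^ n := by rw [this, hDtr, ← Complex.ofReal_pow, Complex.ofReal_re]
  have hA : ∑ x, (Λ x * σout γ n x).trace.re ≤ (1 + s) ^ n := hsumD ▸ hsum_le
  have h2n : (0 : ℝ) ≤ ((2 : ℝ) ^ n)⁻¹ := by positivity
  calc ((2 : ℝ) ^ n)⁻¹ * ∑ x, (Λ x * σout γ n x).trace.re
      ≤ ((2 : ℝ) ^ n)⁻¹ * (1 + s) ^ n := mul_le_mul_of_nonneg_left hA h2n
    _ = ((1 + s) / 2) ^ n := by rw [div_pow, div_eq_inv_mul]
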